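/- arXiv:2103.10808 — 5 statements merged into one kernel-verified Lean document; each statement's English description precedes it below -/
import Mathlib

section
/- Let G be a labelled acyclic directed multigraph and X a nonempty proper subset of V(G). Then the contraction G/X is again acyclic, provided that the set of arcs [X, V(G)\setminus X] between X and its complement contains no backward arcs (i.e., every arc with one end in X and one end in Y = V(G)\setminus X has its tail in X and head in Y). -/
/-- A labelled directed multigraph: vertex type `V`, arc type `A`, label type `L`,
incidence function `mu` giving (tail, head), and arc labelling `lab`. -/
structure LDMG (V A L : Type) where
  mu : A → V × V
  lab : A → L

namespace LDMG

variable {V A L V' A' : Type}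

/-- The one-step arc relation. -/
def step (G : LDMG V A L) (u v : V) : Prop := ∃ a, G.mu a = (u, v)

/-- `G` is acyclic: no directed cycle. -/
def Acyclic (G : LDMG V A L) : Prop := ∀ v, ¬ Relation.TransGen G.step v v

/-- `v` has in-degree 0 in `G`. -/
def InDegZero (G : LDMG V A L) (v : V) : Prop := ∀ a, (G.mu a).2 ≠ v

/-- `v` has out-degree 0 in `G`. -/
def OutDegZero (G : LDMG V A L) (v : V) : Prop := ∀ a, (G.mu a).1 ≠ v

/-- `peel G n`: the set of vertices deleted after `n` rounds of repeatedly removing the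
vertices of in-degree 0 (together with the arcs with tails there). -/
def peel (G : LDMG V A L) : ℕ → Set V
  | 0 => ∅
  | n + 1 => peel G n ∪ {v | ∀ a, (G.mu a).2 = v → (G.mu a).1 ∈ peel G n}

/-- The level set `S^n(G)`. -/
def levelSet (G : LDMG V A L) (n : ℕ) : Set V := peel G (n + 1) \ peel G n

/-- Vertex type of the contraction `G/X`: the vertices outside `X` together with one new
vertex (`Sum.inr ()`) replacing `X`. -/
def CVertex (X : Set V) : Type := {v : V // v ∉ X} ⊕ Unit

/-- Canonical projection of vertices to contraction vertices. -/
noncomputable def cMap (X : Set V) (v : V) : CVertex X :=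
  haveI := Classical.propDecidable (v ∈ X)
  if h : v ∈ X then Sum.inr () else Sum.inl ⟨v, h⟩

/-- The arcs of `G` surviving the contraction of `X` (i.e. not having both ends in `X`),
before identification of parallel equally-labelled arcs. -/
def CPre (G : LDMG V A L) (X : Set V) : Type :=
  {a : A // ¬ ((G.mu a).1 ∈ X ∧ (G.mu a).2 ∈ X)}

noncomputable def cKey (G : LDMG V A L) (X : Set V) (a : CPre G X) :
    (CVertex X × CVertex X) × L :=
  ((cMap X (G.mu a.1).1, cMap X (G.mu a.1).2), G.lab a.1)

/-- Arc type of `G/X`: surviving arcs, with arcs having identical tail, head and label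
identified. -/
def CArc (G : LDMG V A L) (X : Set V) : Type :=
  Quotient (Setoid.ker (cKey G X))

/-- The contraction `G/X`. -/
noncomputable def contract (G : LDMG V A L) (X : Set V) : LDMG (CVertex X) (CArc G X) L where
  mu := Quotient.lift (fun a => (cKey G X a).1) (fun _ _ h => congrArg Prod.fst h)
  lab := Quotient.lift (fun a => (cKey G X a).2) (fun _ _ h => congrArg Prod.snd h)

/-- The Cartesian product `G □ H`. -/
def box (G : LDMG V A L) (H : LDMG V' A' L) : LDMG (V × V') (A × V' ⊕ V × A') L where
  mu := fun x =>
    match x with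
    | Sum.inl (a, w) => (((G.mu a).1, w), ((G.mu a).2, w))
    | Sum.inr (u, b) => ((u, (H.mu b).1), (u, (H.mu b).2))
  lab := fun x =>
    match x with
    | Sum.inl (a, _) => G.lab a
    | Sum.inr (_, b) => H.lab b

/-- The label `ℓ` occurs in `G`. -/
def HasLab (G : LDMG V A L) (ℓ : L) : Prop := ∃ a, G.lab a = ℓ

/-- Arc type of the intermediate product `G ⊠ H`: asynchronous copies of arcs of `G`
(whose label does not occur in `H`), asynchronous copies of arcs of `H` (whose label
does not occur in `G`), and synchronous arcs for pairs of equally labelled arcs. -/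
def InterArc (G : LDMG V A L) (H : LDMG V' A' L) : Type :=
  {p : A × V' // ¬ H.HasLab (G.lab p.1)} ⊕
  {p : V × A' // ¬ G.HasLab (H.lab p.2)} ⊕
  {p : A × A' // G.lab p.1 = H.lab p.2}

/-- The intermediate product `G ⊠ H`. -/
def inter (G : LDMG V A L) (H : LDMG V' A' L) : LDMG (V × V') (InterArc G H) L where
  mu := fun x =>
    match x with
    | Sum.inl ⟨(a, w), _⟩ => (((G.mu a).1, w), ((G.mu a).2, w))
    | Sum.inr (Sum.inl ⟨(u, b), _⟩) => ((u, (H.mu b).1), (u, (H.mu b).2))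
    | Sum.inr (Sum.inr ⟨(a, b), _⟩) => (((G.mu a).1, (H.mu b).1), ((G.mu a).2, (H.mu b).2))
  lab := fun x =>
    match x with
    | Sum.inl ⟨(a, _), _⟩ => G.lab a
    | Sum.inr (Sum.inl ⟨(_, b), _⟩) => H.lab b
    | Sum.inr (Sum.inr ⟨(a, _), _⟩) => G.lab a

/-- `v` has positive level in `G □ H`, i.e. some in-arc in the Cartesian product. -/
def PosLevelBox (G : LDMG V A L) (H : LDMG V' A' L) (v : V × V') : Prop :=
  ∃ x, ((G.box H).mu x).2 = v

/-- The set of vertices removed after `n` rounds of the VRSP removal process: repeatedly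
remove the vertices having in-degree 0 in the current graph but positive level in `G □ H`
(together with their out-arcs). -/
def vrspRem (G : LDMG V A L) (H : LDMG V' A' L) : ℕ → Set (V × V')
  | 0 => ∅
  | n + 1 => vrspRem G H n ∪
      {v | PosLevelBox G H v ∧
        ∀ x, ((G.inter H).mu x).2 = v → ((G.inter H).mu x).1 ∈ vrspRem G H n}

/-- All vertices eventually removed in the VRSP removal process. -/
def vrspRemoved (G : LDMG V A L) (H : LDMG V' A' L) : Set (V × V') := ⋃ n, vrspRem G H n

/-- Vertex type of the vertex-removing synchronised product `G ⊟ H`. -/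
def VrspV (G : LDMG V A L) (H : LDMG V' A' L) : Type := {v : V × V' // v ∉ vrspRemoved G H}

/-- Arc type of `G ⊟ H`: arcs of `G ⊠ H` with both ends surviving. -/
def VrspArc (G : LDMG V A L) (H : LDMG V' A' L) : Type :=
  {x : InterArc G H // ((G.inter H).mu x).1 ∉ vrspRemoved G H ∧
    ((G.inter H).mu x).2 ∉ vrspRemoved G H}

/-- The vertex-removing synchronised product `G ⊟ H`. -/
def vrsp (G : LDMG V A L) (H : LDMG V' A' L) : LDMG (VrspV G H) (VrspArc G H) L where
  mu := fun x => (⟨((G.inter H).mu x.1).1, x.2.1⟩, ⟨((G.inter H).mu x.1).2, x.2.2⟩)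
  lab := fun x => (G.inter H).lab x.1

/-- Isomorphism of labelled directed multigraphs: a vertex bijection preserving the
existence of arcs together with their labels. -/
def Iso (G : LDMG V A L) {V' A' : Type} (H : LDMG V' A' L) : Prop :=
  ∃ φ : V ≃ V', ∀ u v ℓ,
    (∃ a, G.mu a = (u, v) ∧ G.lab a = ℓ) ↔ (∃ b, H.mu b = (φ u, φ v) ∧ H.lab b = ℓ)

end LDMG

/-- The contraction `G/X` of an acyclic labelled directed multigraph `G` by a nonempty
proper subset `X` of its vertices is again acyclic, provided `[X, V ∖ X]` has no backward
arcs (every arc with head in `X` has its tail in `X`). -/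
theorem contract_acyclic {V A L : Type} (G : LDMG V A L) (hacyc : G.Acyclic)
    (X : Set V) (hXne : X.Nonempty) (hXproper : X ≠ Set.univ)
    (hnoback : ∀ a : A, (G.mu a).2 ∈ X → (G.mu a).1 ∈ X) :
    (G.contract X).Acyclic := by
  -- Every step in the contraction ends at a non-contracted vertex, and lifts to a step in G.
  have key : ∀ u' v', (G.contract X).step u' v' →
      ∃ (w : V) (hw : w ∉ X), v' = Sum.inl ⟨w, hw⟩ ∧
        ∀ (u : V) (hu : u ∉ X), u' = Sum.inl ⟨u, hu⟩ → G.step u w := by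
    rintro u' v' ⟨c, hc⟩
    obtain ⟨a, rfl⟩ := Quotient.exists_rep c
    have hmu : (LDMG.cMap X (G.mu a.1).1, LDMG.cMap X (G.mu a.1).2) = (u', v') := hc
    have htail : LDMG.cMap X (G.mu a.1).1 = u' := congrArg Prod.fst hmu
    have hhead : LDMG.cMap X (G.mu a.1).2 = v' := congrArg Prod.snd hmu
    have hhX : (G.mu a.1).2 ∉ X := by
      intro hh
      exact a.2 ⟨hnoback a.1 hh, hh⟩
    refine ⟨(G.mu a.1).2, hhX, ?_, ?_⟩
    · rw [← hhead]
      simp [LDMG.cMap, hhX]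
      rfl
    · rintro u hu rfl
      have htX : (G.mu a.1).1 ∉ X := by
        intro ht
        rw [show LDMG.cMap X (G.mu a.1).1 = Sum.inr () by simp only [LDMG.cMap]; exact dif_pos ht] at htail
        exact nomatch htail
      rw [show LDMG.cMap X (G.mu a.1).1 = Sum.inl ⟨_, htX⟩ by simp only [LDMG.cMap]; exact dif_neg htX] at htail
      have : (G.mu a.1).1 = u := congrArg Subtype.val (Sum.inl.inj htail)
      exact ⟨a.1, by rw [← this]⟩
  have main : ∀ u' v', Relation.TransGen (G.contract X).step u' v' →
      ∃ (w : V) (hw : w ∉ X), v' = Sum.inl ⟨w, hw⟩ ∧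
        ∀ (u : V) (hu : u ∉ X), u' = Sum.inl ⟨u, hu⟩ → Relation.TransGen G.step u w := by
    intro u' v' h
    induction h with
    | single hstep =>
      obtain ⟨w, hw, rfl, hlift⟩ := key _ _ hstep
      exact ⟨w, hw, rfl, fun u hu hu' => .single (hlift u hu hu')⟩
    | tail _ hstep ih =>
      obtain ⟨w, hw, rfl, hlift⟩ := ih
      obtain ⟨w2, hw2, rfl, hlift2⟩ := key _ _ hstep
      exact ⟨w2, hw2, rfl, fun u hu hu' =>
        (hlift u hu hu').tail (hlift2 w hw rfl)⟩
  rintro v' hcyc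
  obtain ⟨w, hw, rfl, hlift⟩ := main _ _ hcyc
  exact hacyc w (hlift w hw rfl)
end

section
/- Let B(X,Y) be a complete bipartite labelled acyclic directed graph in which all arcs have the same label, the arc set [X,Y] is nonempty, and all arcs are directed from X to Y (no backward arcs). Then B(X,Y) is isomorphic (as a labelled directed graph) to the vertex-removing synchronised product (B(X,Y)/Y) \boxbackslash (B(X,Y)/X). -/
/-- A complete bipartite labelled acyclic directed graph `B(X,Y)` (all arcs from `X` to
`Y`, all with the same label, at least one arc) is isomorphic to the vertex-removing
synchronised product `(B(X,Y)/Y) ⊟ (B(X,Y)/X)`. -/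
theorem completeBipartite_iso_vrsp {V A L : Type} [Fintype V] [Fintype A]
    (G : LDMG V A L) (X Y : Set V) (ℓ : L)
    (hacyc : G.Acyclic)
    (hcover : ∀ v : V, v ∈ X ∨ v ∈ Y) (hdisj : Disjoint X Y)
    (hXne : X.Nonempty) (hYne : Y.Nonempty)
    (harc : ∀ a : A, (G.mu a).1 ∈ X ∧ (G.mu a).2 ∈ Y)
    (hcomp : ∀ x ∈ X, ∀ y ∈ Y, ∃ a : A, G.mu a = (x, y))
    (hsimple : Function.Injective G.mu)
    (hlab : ∀ a : A, G.lab a = ℓ)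
    (hAne : Nonempty A) :
    LDMG.Iso G ((G.contract Y).vrsp (G.contract X)) := by
  classical
  obtain ⟨a0⟩ := hAne
  obtain ⟨x0, hx0⟩ := hXne
  have hXnY : ∀ v, v ∈ X → v ∉ Y := fun v hv hv' => Set.disjoint_left.mp hdisj hv hv'
  have hYnX : ∀ v, v ∈ Y → v ∉ X := fun v hv hv' => Set.disjoint_left.mp hdisj hv' hv
  have hc1 : ∀ a : A, ¬ ((G.mu a).1 ∈ Y ∧ (G.mu a).2 ∈ Y) := fun a h =>
    hXnY _ (harc a).1 h.1
  have hc2 : ∀ a : A, ¬ ((G.mu a).1 ∈ X ∧ (G.mu a).2 ∈ X) := fun a h =>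
    hYnX _ (harc a).2 h.2
  let e1 : A → LDMG.CArc G Y := fun a => Quotient.mk (Setoid.ker (LDMG.cKey G Y)) ⟨a, hc1 a⟩
  let e2 : A → LDMG.CArc G X := fun a => Quotient.mk (Setoid.ker (LDMG.cKey G X)) ⟨a, hc2 a⟩
  have cMap_mem : ∀ (S : Set V) (v : V), v ∈ S → LDMG.cMap S v = Sum.inr () := by
    intro S v h; unfold LDMG.cMap; exact dif_pos h
  have cMap_not : ∀ (S : Set V) (v : V) (h : v ∉ S), LDMG.cMap S v = Sum.inl ⟨v, h⟩ := by
    intro S v h; unfold LDMG.cMap; exact dif_neg h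
  have mu_e1 : ∀ a : A, (G.contract Y).mu (e1 a)
      = (Sum.inl ⟨(G.mu a).1, hXnY _ (harc a).1⟩, Sum.inr ()) := by
    intro a
    show (LDMG.cKey G Y ⟨a, hc1 a⟩).1 = _
    unfold LDMG.cKey
    rw [cMap_not Y _ (hXnY _ (harc a).1), cMap_mem Y _ (harc a).2]; rfl
  have mu_e2 : ∀ a : A, (G.contract X).mu (e2 a)
      = (Sum.inr (), Sum.inl ⟨(G.mu a).2, hYnX _ (harc a).2⟩) := by
    intro a
    show (LDMG.cKey G X ⟨a, hc2 a⟩).1 = _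
    unfold LDMG.cKey
    rw [cMap_not X _ (hYnX _ (harc a).2), cMap_mem X _ (harc a).1]; rfl
  have lab_e1 : ∀ a : A, (G.contract Y).lab (e1 a) = ℓ := fun a => hlab a
  have lab_e2 : ∀ a : A, (G.contract X).lab (e2 a) = ℓ := fun a => hlab a
  have repr1 : ∀ e : LDMG.CArc G Y, ∃ a : A, e = e1 a := by
    intro e
    induction e using Quotient.ind with
    | _ c => exact ⟨c.1, rfl⟩
  have repr2 : ∀ e : LDMG.CArc G X, ∃ a : A, e = e2 a := by
    intro e
    induction e using Quotient.ind with
    | _ c => exact ⟨c.1, rfl⟩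
  have hHas1 : (G.contract Y).HasLab ℓ := ⟨e1 a0, lab_e1 a0⟩
  have hHas2 : (G.contract X).HasLab ℓ := ⟨e2 a0, lab_e2 a0⟩
  -- vertices (inl x, inr ()) are never removed
  have surv1 : ∀ (x : {v : V // v ∉ Y}) (n : ℕ),
      ((Sum.inl x, Sum.inr ()) : LDMG.CVertex Y × LDMG.CVertex X)
        ∉ LDMG.vrspRem (G.contract Y) (G.contract X) n := by
    intro x n
    induction n with
    | zero => simp [LDMG.vrspRem]
    | succ n ih =>
      intro hmem
      rw [LDMG.vrspRem] at hmem
      rcases hmem with h | ⟨⟨bx, hbx⟩, -⟩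
      · exact ih h
      · rcases bx with ⟨e, w⟩ | ⟨u, b⟩
        · obtain ⟨a, rfl⟩ := repr1 e
          have : ((((G.contract Y).mu (e1 a)).2, w) :
              LDMG.CVertex Y × LDMG.CVertex X) = (Sum.inl x, Sum.inr ()) := hbx
          rw [mu_e1 a] at this
          exact Sum.inr_ne_inl (congrArg Prod.fst this)
        · obtain ⟨a, rfl⟩ := repr2 b
          have : ((u, ((G.contract X).mu (e2 a)).2) :
              LDMG.CVertex Y × LDMG.CVertex X) = (Sum.inl x, Sum.inr ()) := hbx
          rw [mu_e2 a] at this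
          exact Sum.inl_ne_inr (congrArg Prod.snd this)
  -- vertices (inr (), inl y) are never removed
  have surv2 : ∀ (y : {v : V // v ∉ X}) (n : ℕ),
      ((Sum.inr (), Sum.inl y) : LDMG.CVertex Y × LDMG.CVertex X)
        ∉ LDMG.vrspRem (G.contract Y) (G.contract X) n := by
    intro y n
    induction n with
    | zero => simp [LDMG.vrspRem]
    | succ n ih =>
      intro hmem
      rw [LDMG.vrspRem] at hmem
      rcases hmem with h | ⟨-, hall⟩
      · exact ih h
      · have hyY : y.1 ∈ Y := (hcover y.1).resolve_left y.2
        obtain ⟨a, ha⟩ := hcomp x0 hx0 y.1 hyY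
        have hlabeq : (G.contract Y).lab (e1 a) = (G.contract X).lab (e2 a) := by
          rw [lab_e1, lab_e2]
        have hhead : (((G.contract Y).inter (G.contract X)).mu
            (Sum.inr (Sum.inr ⟨(e1 a, e2 a), hlabeq⟩))).2 = (Sum.inr (), Sum.inl y) := by
          show ((((G.contract Y).mu (e1 a)).2, ((G.contract X).mu (e2 a)).2) :
              LDMG.CVertex Y × LDMG.CVertex X) = (Sum.inr (), Sum.inl y)
          rw [mu_e1 a, mu_e2 a]
          have h2 : (G.mu a).2 = y.1 := by rw [ha]
          exact Prod.ext rfl (congrArg Sum.inl (Subtype.ext h2))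
        have htail := hall _ hhead
        have : (((G.contract Y).inter (G.contract X)).mu
            (Sum.inr (Sum.inr ⟨(e1 a, e2 a), hlabeq⟩))).1
            = ((Sum.inl ⟨(G.mu a).1, hXnY _ (harc a).1⟩, Sum.inr ()) :
              LDMG.CVertex Y × LDMG.CVertex X) := by
          show ((((G.contract Y).mu (e1 a)).1, ((G.contract X).mu (e2 a)).1) :
              LDMG.CVertex Y × LDMG.CVertex X) = _
          rw [mu_e1 a, mu_e2 a]
        rw [this] at htail
        exact surv1 _ n htail
  -- vertices (inl x, inl y) are removed at round 1
  have rem_yy : ∀ (x : {v : V // v ∉ Y}) (y : {v : V // v ∉ X}),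
      ((Sum.inl x, Sum.inl y) : LDMG.CVertex Y × LDMG.CVertex X)
        ∈ LDMG.vrspRem (G.contract Y) (G.contract X) 1 := by
    intro x y
    rw [LDMG.vrspRem]
    right
    constructor
    · have hyY : y.1 ∈ Y := (hcover y.1).resolve_left y.2
      obtain ⟨a, ha⟩ := hcomp x0 hx0 y.1 hyY
      refine ⟨Sum.inr (Sum.inl x, e2 a), ?_⟩
      show ((Sum.inl x, ((G.contract X).mu (e2 a)).2) :
          LDMG.CVertex Y × LDMG.CVertex X) = (Sum.inl x, Sum.inl y)
      rw [mu_e2 a]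
      have h2 : (G.mu a).2 = y.1 := by rw [ha]
      exact Prod.ext rfl (congrArg Sum.inl (Subtype.ext h2))
    · intro s hs
      exfalso
      rcases s with ⟨⟨a, w⟩, hcond⟩ | ⟨⟨u, b⟩, hcond⟩ | ⟨⟨a, b⟩, hcond⟩
      · obtain ⟨c, rfl⟩ := repr1 a
        exact hcond (lab_e1 c ▸ hHas2)
      · obtain ⟨c, rfl⟩ := repr2 b
        exact hcond (lab_e2 c ▸ hHas1)
      · obtain ⟨c, rfl⟩ := repr1 a
        have : ((((G.contract Y).mu (e1 c)).2, ((G.contract X).mu b).2) :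
            LDMG.CVertex Y × LDMG.CVertex X) = (Sum.inl x, Sum.inl y) := hs
        rw [mu_e1 c] at this
        exact Sum.inr_ne_inl (congrArg Prod.fst this)
  have rem_ss : ((Sum.inr (), Sum.inr ()) : LDMG.CVertex Y × LDMG.CVertex X)
      ∈ LDMG.vrspRem (G.contract Y) (G.contract X) 1 := by
    rw [LDMG.vrspRem]
    right
    constructor
    · refine ⟨Sum.inl (e1 a0, Sum.inr ()), ?_⟩
      show ((((G.contract Y).mu (e1 a0)).2, (Sum.inr () : LDMG.CVertex X)) :
          LDMG.CVertex Y × LDMG.CVertex X) = (Sum.inr (), Sum.inr ())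
      rw [mu_e1 a0]; rfl
    · intro s hs
      exfalso
      rcases s with ⟨⟨a, w⟩, hcond⟩ | ⟨⟨u, b⟩, hcond⟩ | ⟨⟨a, b⟩, hcond⟩
      · obtain ⟨c, rfl⟩ := repr1 a
        exact hcond (lab_e1 c ▸ hHas2)
      · obtain ⟨c, rfl⟩ := repr2 b
        exact hcond (lab_e2 c ▸ hHas1)
      · obtain ⟨c, rfl⟩ := repr2 b
        have hth : ((((G.contract Y).mu a).2, ((G.contract X).mu (e2 c)).2) :
            LDMG.CVertex Y × LDMG.CVertex X) = (Sum.inr (), Sum.inr ()) := hs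
        rw [mu_e2 c] at hth
        exact Sum.inl_ne_inr (congrArg Prod.snd hth)
  have nsurv1 : ∀ x : {v : V // v ∉ Y},
      ((Sum.inl x, Sum.inr ()) : LDMG.CVertex Y × LDMG.CVertex X)
        ∉ LDMG.vrspRemoved (G.contract Y) (G.contract X) := by
    intro x h
    obtain ⟨n, hn⟩ := Set.mem_iUnion.mp h
    exact surv1 x n hn
  have nsurv2 : ∀ y : {v : V // v ∉ X},
      ((Sum.inr (), Sum.inl y) : LDMG.CVertex Y × LDMG.CVertex X)
        ∉ LDMG.vrspRemoved (G.contract Y) (G.contract X) := by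
    intro y h
    obtain ⟨n, hn⟩ := Set.mem_iUnion.mp h
    exact surv2 y n hn
  have inrem : ∀ p : LDMG.CVertex Y × LDMG.CVertex X,
      p ∈ LDMG.vrspRem (G.contract Y) (G.contract X) 1 →
      p ∈ LDMG.vrspRemoved (G.contract Y) (G.contract X) :=
    fun p hp => Set.mem_iUnion.mpr ⟨1, hp⟩
  let f : V → LDMG.VrspV (G.contract Y) (G.contract X) := fun v =>
    if h : v ∈ Y then ⟨(Sum.inr (), Sum.inl ⟨v, hYnX v h⟩), nsurv2 _⟩
    else ⟨(Sum.inl ⟨v, h⟩, Sum.inr ()), nsurv1 _⟩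
  have f_mem : ∀ (v : V) (h : v ∈ Y),
      f v = ⟨(Sum.inr (), Sum.inl ⟨v, hYnX v h⟩), nsurv2 _⟩ := fun v h => dif_pos h
  have f_not : ∀ (v : V) (h : v ∉ Y),
      f v = ⟨(Sum.inl ⟨v, h⟩, Sum.inr ()), nsurv1 _⟩ := fun v h => dif_neg h
  have fval_mem : ∀ (v : V) (h : v ∈ Y),
      (f v).1 = (Sum.inr (), Sum.inl ⟨v, hYnX v h⟩) := fun v h => by rw [f_mem v h]; rfl
  have fval_not : ∀ (v : V) (h : v ∉ Y),
      (f v).1 = (Sum.inl ⟨v, h⟩, Sum.inr ()) := fun v h => by rw [f_not v h]; rfl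
  have finj : Function.Injective f := by
    intro u v h
    have h' : (f u).1 = (f v).1 := congrArg Subtype.val h
    by_cases hu : u ∈ Y <;> by_cases hv : v ∈ Y
    · rw [fval_mem u hu, fval_mem v hv] at h'
      exact congrArg Subtype.val (Sum.inl.inj (congrArg Prod.snd h'))
    · rw [fval_mem u hu, fval_not v hv] at h'
      exact (Sum.inr_ne_inl (congrArg Prod.fst h')).elim
    · rw [fval_not u hu, fval_mem v hv] at h'
      exact (Sum.inl_ne_inr (congrArg Prod.fst h')).elim
    · rw [fval_not u hu, fval_not v hv] at h'
      exact congrArg Subtype.val (Sum.inl.inj (congrArg Prod.fst h'))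
  have fsurj : Function.Surjective f := by
    rintro ⟨⟨p1, p2⟩, hp⟩
    rcases p1 with x | u <;> rcases p2 with y | w
    · exact absurd (inrem _ (rem_yy x y)) hp
    · cases w
      refine ⟨x.1, ?_⟩
      rw [f_not x.1 x.2]
    · cases u
      have hyY : y.1 ∈ Y := (hcover y.1).resolve_left y.2
      refine ⟨y.1, ?_⟩
      rw [f_mem y.1 hyY]
    · exact absurd (inrem _ rem_ss) hp
  have main : ∀ (u v : V) (ℓ' : L),
      (∃ a, G.mu a = (u, v) ∧ G.lab a = ℓ') ↔
      (∃ b, ((G.contract Y).vrsp (G.contract X)).mu b = (f u, f v) ∧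
        ((G.contract Y).vrsp (G.contract X)).lab b = ℓ') := by
    intro u v ℓ'
    constructor
    · rintro ⟨a, ha, hl⟩
      have huX : u ∈ X := by have h := (harc a).1; rw [ha] at h; exact h
      have hvY : v ∈ Y := by have h := (harc a).2; rw [ha] at h; exact h
      have hlabeq : (G.contract Y).lab (e1 a) = (G.contract X).lab (e2 a) := by
        rw [lab_e1, lab_e2]
      have htail : (((G.contract Y).inter (G.contract X)).mu
          (Sum.inr (Sum.inr ⟨(e1 a, e2 a), hlabeq⟩))).1
          = ((Sum.inl ⟨(G.mu a).1, hXnY _ (harc a).1⟩, Sum.inr ()) :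
            LDMG.CVertex Y × LDMG.CVertex X) := by
        show ((((G.contract Y).mu (e1 a)).1, ((G.contract X).mu (e2 a)).1) :
            LDMG.CVertex Y × LDMG.CVertex X) = _
        rw [mu_e1 a, mu_e2 a]
      have hhead : (((G.contract Y).inter (G.contract X)).mu
          (Sum.inr (Sum.inr ⟨(e1 a, e2 a), hlabeq⟩))).2
          = ((Sum.inr (), Sum.inl ⟨(G.mu a).2, hYnX _ (harc a).2⟩) :
            LDMG.CVertex Y × LDMG.CVertex X) := by
        show ((((G.contract Y).mu (e1 a)).2, ((G.contract X).mu (e2 a)).2) :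
            LDMG.CVertex Y × LDMG.CVertex X) = _
        rw [mu_e1 a, mu_e2 a]
      refine ⟨⟨Sum.inr (Sum.inr ⟨(e1 a, e2 a), hlabeq⟩),
        by rw [htail]; exact nsurv1 _, by rw [hhead]; exact nsurv2 _⟩, ?_, ?_⟩
      · have hu1 : (G.mu a).1 = u := by rw [ha]
        have hv2 : (G.mu a).2 = v := by rw [ha]
        apply Prod.ext
        · apply Subtype.ext
          show (((G.contract Y).inter (G.contract X)).mu
            (Sum.inr (Sum.inr ⟨(e1 a, e2 a), hlabeq⟩))).1 = (f u).1
          rw [htail, fval_not u (hXnY u huX)]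
          exact Prod.ext (congrArg Sum.inl (Subtype.ext hu1)) rfl
        · apply Subtype.ext
          show (((G.contract Y).inter (G.contract X)).mu
            (Sum.inr (Sum.inr ⟨(e1 a, e2 a), hlabeq⟩))).2 = (f v).1
          rw [hhead, fval_mem v hvY]
          exact Prod.ext rfl (congrArg Sum.inl (Subtype.ext hv2))
      · exact hl
    · rintro ⟨⟨s, hs1, hs2⟩, hb, hl⟩
      rcases s with ⟨⟨e, w⟩, hcond⟩ | ⟨⟨uu, e⟩, hcond⟩ | ⟨⟨e, e'⟩, hcond⟩
      · obtain ⟨c, rfl⟩ := repr1 e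
        exact absurd (lab_e1 c ▸ hHas2) hcond
      · obtain ⟨c, rfl⟩ := repr2 e
        exact absurd (lab_e2 c ▸ hHas1) hcond
      · obtain ⟨c, rfl⟩ := repr1 e
        obtain ⟨c', rfl⟩ := repr2 e'
        have hbu : ((((G.contract Y).mu (e1 c)).1, ((G.contract X).mu (e2 c')).1) :
            LDMG.CVertex Y × LDMG.CVertex X) = (f u).1 :=
          congrArg (fun p => p.1.1) hb
        have hbv : ((((G.contract Y).mu (e1 c)).2, ((G.contract X).mu (e2 c')).2) :
            LDMG.CVertex Y × LDMG.CVertex X) = (f v).1 :=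
          congrArg (fun p => p.2.1) hb
        rw [mu_e1 c, mu_e2 c'] at hbu hbv
        have huX : u ∈ X := by
          by_cases hu : u ∈ Y
          · rw [fval_mem u hu] at hbu
            exact absurd (congrArg Prod.fst hbu) Sum.inl_ne_inr
          · rw [fval_not u hu] at hbu
            have h1 : (Sum.inl ⟨(G.mu c).1, hXnY _ (harc c).1⟩ : LDMG.CVertex Y)
                = Sum.inl ⟨u, hu⟩ := congrArg Prod.fst hbu
            have h2 : (G.mu c).1 = u := congrArg Subtype.val (Sum.inl.inj h1)
            rw [← h2]
            exact (harc c).1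
        have hvY : v ∈ Y := by
          by_cases hv : v ∈ Y
          · exact hv
          · rw [fval_not v hv] at hbv
            exact absurd (congrArg Prod.fst hbv) Sum.inr_ne_inl
        have hll : ℓ = ℓ' := (lab_e1 c).symm.trans hl
        obtain ⟨a, ha⟩ := hcomp u huX v hvY
        exact ⟨a, ha, (hlab a).trans hll⟩
  exact ⟨Equiv.ofBijective f ⟨finj, fsurj⟩, fun u v ℓ' => main u v ℓ'⟩
end

section
/- With B(X,Y) as in the complete bipartite setting, in the intermediate product (B(X,Y)/Y) \boxtimes (B(X,Y)/X) every vertex of the form (u_i, v_j) with u_i in X and v_j in Y, and the vertex (\tilde{y}, \tilde{x}), has in-degree 0 and out-degree 0, while each such vertex has positive level in the Cartesian product (B(X,Y)/Y) \Box (B(X,Y)/X). Consequently the vertex set of (B(X,Y)/Y) \boxbackslash (B(X,Y)/X) is exactly {(u_i, \tilde{x}) : u_i in X} \cup {(\tilde{y}, v_j) : v_j in Y}. -/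
section Aux

variable {V A L : Type}

lemma cMap_eq_inr (X : Set V) {v : V} (h : v ∈ X) : LDMG.cMap X v = Sum.inr () := by
  simp [LDMG.cMap, h]
  rfl

lemma cMap_eq_inl (X : Set V) {v : V} (h : v ∉ X) : LDMG.cMap X v = Sum.inl ⟨v, h⟩ := by
  simp [LDMG.cMap, h]
  rfl

lemma contract_mu_mk (G : LDMG V A L) (X : Set V) (a : LDMG.CPre G X) :
    (G.contract X).mu (Quotient.mk _ a) =
      (LDMG.cMap X (G.mu a.1).1, LDMG.cMap X (G.mu a.1).2) := rfl

lemma contract_lab_mk (G : LDMG V A L) (X : Set V) (a : LDMG.CPre G X) :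
    (G.contract X).lab (Quotient.mk _ a) = G.lab a.1 := rfl

end Aux

/-- For complete bipartite `B(X,Y)`, in `(B/Y) ⊠ (B/X)` every vertex `(u_i, v_j)`
(`u_i ∈ X`, `v_j ∈ Y`) and the vertex `(ỹ, x̃)` has in- and out-degree 0 while having
positive level in `(B/Y) □ (B/X)`; consequently the vertex set of `(B/Y) ⊟ (B/X)` is
exactly `{(u_i, x̃)} ∪ {(ỹ, v_j)}`. -/
theorem completeBipartite_vrsp_vertexSet {V A L : Type} [Fintype V] [Fintype A]
    (G : LDMG V A L) (X Y : Set V) (ℓ : L)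
    (hcover : ∀ v : V, v ∈ X ∨ v ∈ Y) (hdisj : Disjoint X Y)
    (hXne : X.Nonempty) (hYne : Y.Nonempty)
    (harc : ∀ a : A, (G.mu a).1 ∈ X ∧ (G.mu a).2 ∈ Y)
    (hcomp : ∀ x ∈ X, ∀ y ∈ Y, ∃ a : A, G.mu a = (x, y))
    (hsimple : Function.Injective G.mu)
    (hlab : ∀ a : A, G.lab a = ℓ) :
    (∀ u ∈ X, ∀ v ∈ Y,
        ((G.contract Y).inter (G.contract X)).InDegZero (LDMG.cMap Y u, LDMG.cMap X v) ∧
        ((G.contract Y).inter (G.contract X)).OutDegZero (LDMG.cMap Y u, LDMG.cMap X v) ∧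
        LDMG.PosLevelBox (G.contract Y) (G.contract X) (LDMG.cMap Y u, LDMG.cMap X v)) ∧
    (((G.contract Y).inter (G.contract X)).InDegZero (Sum.inr (), Sum.inr ()) ∧
        ((G.contract Y).inter (G.contract X)).OutDegZero (Sum.inr (), Sum.inr ()) ∧
        LDMG.PosLevelBox (G.contract Y) (G.contract X) (Sum.inr (), Sum.inr ())) ∧
    (∀ w : LDMG.CVertex Y × LDMG.CVertex X,
        w ∉ LDMG.vrspRemoved (G.contract Y) (G.contract X) ↔
          (∃ u ∈ X, w = (LDMG.cMap Y u, Sum.inr ())) ∨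
          (∃ v ∈ Y, w = (Sum.inr (), LDMG.cMap X v))) := by
  classical
  obtain ⟨x0, hx0⟩ := hXne
  obtain ⟨y0, hy0⟩ := hYne
  obtain ⟨a0, ha0⟩ := hcomp x0 hx0 y0 hy0
  have hXnotY : ∀ {v : V}, v ∈ X → v ∉ Y := fun h => Set.disjoint_left.mp hdisj h
  have hYnotX : ∀ {v : V}, v ∈ Y → v ∉ X := fun h => Set.disjoint_right.mp hdisj h
  have hpreY : ∀ a : A, ¬((G.mu a).1 ∈ Y ∧ (G.mu a).2 ∈ Y) :=
    fun a h => hXnotY (harc a).1 h.1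
  have hpreX : ∀ a : A, ¬((G.mu a).1 ∈ X ∧ (G.mu a).2 ∈ X) :=
    fun a h => hYnotX (harc a).2 h.2
  have hlabY : ∀ b : LDMG.CArc G Y, (G.contract Y).lab b = ℓ := by
    refine Quotient.ind (fun a => ?_)
    exact hlab a.1
  have hlabX : ∀ b : LDMG.CArc G X, (G.contract X).lab b = ℓ := by
    refine Quotient.ind (fun a => ?_)
    exact hlab a.1
  have hHasY : (G.contract Y).HasLab ℓ := ⟨Quotient.mk _ ⟨a0, hpreY a0⟩, hlabY _⟩
  have hHasX : (G.contract X).HasLab ℓ := ⟨Quotient.mk _ ⟨a0, hpreX a0⟩, hlabX _⟩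
  -- Every arc of the intermediate product is synchronous and its endpoints have
  -- the indicated shape.
  have hmu : ∀ z : LDMG.InterArc (G.contract Y) (G.contract X), ∃ a b : A,
      (((G.contract Y).inter (G.contract X)).mu z) =
        ((LDMG.cMap Y (G.mu a).1, LDMG.cMap X (G.mu b).1),
         (LDMG.cMap Y (G.mu a).2, LDMG.cMap X (G.mu b).2)) := by
    rintro (⟨⟨c, w⟩, h⟩ | ⟨⟨u', d⟩, h⟩ | ⟨⟨c, d⟩, h⟩)
    · rw [hlabY c] at h; exact absurd hHasX h
    · rw [hlabX d] at h; exact absurd hHasY h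
    · obtain ⟨c', rfl⟩ := Quotient.exists_rep c
      obtain ⟨d', rfl⟩ := Quotient.exists_rep d
      exact ⟨c'.1, d'.1, rfl⟩
  -- parts 1 and 2
  have part1 : ∀ u ∈ X, ∀ v ∈ Y,
      ((G.contract Y).inter (G.contract X)).InDegZero (LDMG.cMap Y u, LDMG.cMap X v) ∧
      ((G.contract Y).inter (G.contract X)).OutDegZero (LDMG.cMap Y u, LDMG.cMap X v) ∧
      LDMG.PosLevelBox (G.contract Y) (G.contract X) (LDMG.cMap Y u, LDMG.cMap X v) := by
    intro u hu v hv
    refine ⟨?_, ?_, ?_⟩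
    · intro z hz
      obtain ⟨a, b, hab⟩ := hmu z
      rw [hab] at hz
      have h1 := congrArg Prod.fst hz
      rw [cMap_eq_inr Y (harc a).2, cMap_eq_inl Y (hXnotY hu)] at h1
      cases h1
    · intro z hz
      obtain ⟨a, b, hab⟩ := hmu z
      rw [hab] at hz
      have h1 := congrArg Prod.snd hz
      rw [cMap_eq_inr X (harc b).1, cMap_eq_inl X (hYnotX hv)] at h1
      cases h1
    · obtain ⟨a1, ha1⟩ := hcomp x0 hx0 v hv
      refine ⟨Sum.inr (LDMG.cMap Y u, Quotient.mk _ ⟨a1, hpreX a1⟩), ?_⟩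
      show (LDMG.cMap Y u, LDMG.cMap X (G.mu a1).2) = _
      rw [ha1]
  have part2 :
      ((G.contract Y).inter (G.contract X)).InDegZero (Sum.inr (), Sum.inr ()) ∧
      ((G.contract Y).inter (G.contract X)).OutDegZero (Sum.inr (), Sum.inr ()) ∧
      LDMG.PosLevelBox (G.contract Y) (G.contract X) (Sum.inr (), Sum.inr ()) := by
    refine ⟨?_, ?_, ?_⟩
    · intro z hz
      obtain ⟨a, b, hab⟩ := hmu z
      rw [hab] at hz
      have h1 := congrArg Prod.snd hz
      rw [cMap_eq_inl X (hYnotX (harc b).2)] at h1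
      cases h1
    · intro z hz
      obtain ⟨a, b, hab⟩ := hmu z
      rw [hab] at hz
      have h1 := congrArg Prod.fst hz
      rw [cMap_eq_inl Y (hXnotY (harc a).1)] at h1
      cases h1
    · refine ⟨Sum.inl (Quotient.mk _ ⟨a0, hpreY a0⟩, Sum.inr ()), ?_⟩
      show (LDMG.cMap Y (G.mu a0).2, (Sum.inr () : LDMG.CVertex X)) = _
      rw [cMap_eq_inr Y (harc a0).2]
      rfl
  -- The two surviving families are never removed.
  have key : ∀ n : ℕ,
      (∀ u ∈ X, (LDMG.cMap Y u, (Sum.inr () : LDMG.CVertex X)) ∉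
          LDMG.vrspRem (G.contract Y) (G.contract X) n) ∧
      (∀ v ∈ Y, ((Sum.inr () : LDMG.CVertex Y), LDMG.cMap X v) ∉
          LDMG.vrspRem (G.contract Y) (G.contract X) n) := by
    intro n
    induction n with
    | zero => exact ⟨fun _ _ h => h, fun _ _ h => h⟩
    | succ n ih =>
      constructor
      · rintro u hu (h | ⟨⟨z, hz⟩, -⟩)
        · exact ih.1 u hu h
        · -- no in-arc in the box product
          rcases z with ⟨c, w⟩ | ⟨u', d⟩
          · obtain ⟨c', rfl⟩ := Quotient.exists_rep c
            have h1 := congrArg Prod.fst hz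
            have h2 : ((G.contract Y).mu (Quotient.mk _ c')).2 = LDMG.cMap Y u := h1
            rw [contract_mu_mk, cMap_eq_inr Y (harc c'.1).2,
              cMap_eq_inl Y (hXnotY hu)] at h2
            cases h2
          · obtain ⟨d', rfl⟩ := Quotient.exists_rep d
            have h1 := congrArg Prod.snd hz
            have h2 : ((G.contract X).mu (Quotient.mk _ d')).2 = Sum.inr () := h1
            rw [contract_mu_mk, cMap_eq_inl X (hYnotX (harc d'.1).2)] at h2
            cases h2
      · rintro v hv (h | ⟨-, hall⟩)
        · exact ih.2 v hv h
        · obtain ⟨a1, ha1⟩ := hcomp x0 hx0 v hv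
          have hlabeq : (G.contract Y).lab (Quotient.mk _ ⟨a0, hpreY a0⟩) =
              (G.contract X).lab (Quotient.mk _ ⟨a1, hpreX a1⟩) := by
            exact (hlabY _).trans (hlabX _).symm
          have hhead : ((((G.contract Y).inter (G.contract X)).mu
              (Sum.inr (Sum.inr ⟨(Quotient.mk _ ⟨a0, hpreY a0⟩,
                Quotient.mk _ ⟨a1, hpreX a1⟩), hlabeq⟩)))).2 =
              ((Sum.inr () : LDMG.CVertex Y), LDMG.cMap X v) := by
            show (LDMG.cMap Y (G.mu a0).2, LDMG.cMap X (G.mu a1).2) = _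
            rw [ha0, ha1, cMap_eq_inr Y hy0]
            rfl
          have := hall _ hhead
          have htail : ((((G.contract Y).inter (G.contract X)).mu
              (Sum.inr (Sum.inr ⟨(Quotient.mk _ ⟨a0, hpreY a0⟩,
                Quotient.mk _ ⟨a1, hpreX a1⟩), hlabeq⟩)))).1 =
              (LDMG.cMap Y x0, (Sum.inr () : LDMG.CVertex X)) := by
            show (LDMG.cMap Y (G.mu a0).1, LDMG.cMap X (G.mu a1).1) = _
            rw [ha0, ha1, cMap_eq_inr X hx0]
            rfl
          rw [htail] at this
          exact ih.1 x0 hx0 this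
  refine ⟨part1, part2, ?_⟩
  intro w
  obtain ⟨p, q⟩ := w
  have hremoved : ∀ w' : LDMG.CVertex Y × LDMG.CVertex X,
      ((G.contract Y).inter (G.contract X)).InDegZero w' →
      LDMG.PosLevelBox (G.contract Y) (G.contract X) w' →
      w' ∈ LDMG.vrspRemoved (G.contract Y) (G.contract X) := by
    intro w' hin hpos
    refine Set.mem_iUnion.mpr ⟨1, Or.inr ⟨hpos, fun z hz => absurd hz (hin z)⟩⟩
  rcases p with ⟨u, hu'⟩ | pu
  · rcases q with ⟨v, hv'⟩ | qv
    · -- (inl, inl): removed, and not of the surviving forms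
      have hu : u ∈ X := (hcover u).resolve_right hu'
      have hv : v ∈ Y := (hcover v).resolve_left hv'
      have heq : ((Sum.inl ⟨u, hu'⟩ : LDMG.CVertex Y),
          (Sum.inl ⟨v, hv'⟩ : LDMG.CVertex X)) = (LDMG.cMap Y u, LDMG.cMap X v) := by
        rw [cMap_eq_inl Y hu', cMap_eq_inl X hv']
        rfl
      have hrem := hremoved _ (heq ▸ (part1 u hu v hv).1)
        (heq ▸ (part1 u hu v hv).2.2)
      constructor
      · intro h; exact absurd (heq ▸ hrem) h
      · rintro (⟨u1, hu1, he⟩ | ⟨v1, hv1, he⟩)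
        · cases congrArg Prod.snd he
        · cases congrArg Prod.fst he
    · obtain ⟨⟩ := qv
      have hu : u ∈ X := (hcover u).resolve_right hu'
      have hne : (Sum.inl ⟨u, hu'⟩ : LDMG.CVertex Y) = LDMG.cMap Y u :=
        (cMap_eq_inl Y hu').symm
      refine iff_of_true ?_ (Or.inl ⟨u, hu, by rw [← hne]; rfl⟩)
      intro h
      obtain ⟨n, hn⟩ := Set.mem_iUnion.mp h
      exact (key n).1 u hu (hne ▸ hn)
  · obtain ⟨⟩ := pu
    rcases q with ⟨v, hv'⟩ | qv
    · have hv : v ∈ Y := (hcover v).resolve_left hv'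
      have hne : (Sum.inl ⟨v, hv'⟩ : LDMG.CVertex X) = LDMG.cMap X v :=
        (cMap_eq_inl X hv').symm
      refine iff_of_true ?_ (Or.inr ⟨v, hv, by rw [← hne]; rfl⟩)
      intro h
      obtain ⟨n, hn⟩ := Set.mem_iUnion.mp h
      exact (key n).2 v hv (hne ▸ hn)
    · obtain ⟨⟩ := qv
      have hrem := hremoved _ part2.1 part2.2.2
      constructor
      · intro h; exact absurd hrem h
      · rintro (⟨u1, hu1, he⟩ | ⟨v1, hv1, he⟩)
        · have h1 := congrArg Prod.fst he
          rw [cMap_eq_inl Y (hXnotY hu1)] at h1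
          cases h1
        · have h1 := congrArg Prod.snd he
          rw [cMap_eq_inl X (hYnotX hv1)] at h1
          cases h1
end

section
/- Let G be a labelled acyclic directed multigraph, X a nonempty proper subset of V(G), Y = V(G)\setminus X. Suppose: (i) for each label \ell, the set of all arcs of [X,Y] with label \ell arc-induces a complete bipartite subgraph of G; (ii) the arcs of G/X and G/Y corresponding to the arcs of [X,Y] are the only synchronising arcs of G/X and G/Y (i.e., a label occurs in both G/X and G/Y only on arcs coming from [X,Y]); (iii) every vertex of in-degree 0 of G lies in X; (iv) [X,Y] has no backward arcs. Then G is isomorphic to (G/Y) \boxbackslash (G/X), via the map sending v in X to (v, \tilde{x}) and w in Y to (\tilde{y}, w). -/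
namespace LDMG

variable {V A L V' A' : Type}

lemma cMap_mem {X : Set V} {v : V} (h : v ∈ X) : cMap X v = Sum.inr () := by
  unfold cMap; exact dif_pos h

lemma cMap_not_mem {X : Set V} {v : V} (h : v ∉ X) : cMap X v = Sum.inl ⟨v, h⟩ := by
  unfold cMap; exact dif_neg h

lemma eq_of_cMap_eq_inl {X : Set V} {v : V} {s : {v : V // v ∉ X}}
    (h : cMap X v = Sum.inl s) : v = s.1 := by
  by_cases hv : v ∈ X
  · rw [cMap_mem hv] at h; exact absurd h (by simp)
  · rw [cMap_not_mem hv] at h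
    exact congrArg Subtype.val (Sum.inl.inj h)

lemma mem_of_cMap_eq_inr {X : Set V} {v : V} (h : cMap X v = Sum.inr ()) : v ∈ X := by
  by_cases hv : v ∈ X
  · exact hv
  · rw [cMap_not_mem hv] at h; exact absurd h (by simp)

lemma contract_mu_mk (G : LDMG V A L) (X : Set V) (a : CPre G X) :
    (G.contract X).mu (Quotient.mk (Setoid.ker (cKey G X)) a) =
      (cMap X (G.mu a.1).1, cMap X (G.mu a.1).2) := rfl

lemma contract_lab_mk (G : LDMG V A L) (X : Set V) (a : CPre G X) :
    (G.contract X).lab (Quotient.mk (Setoid.ker (cKey G X)) a) = G.lab a.1 := rfl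

lemma vrspRem_mono (G : LDMG V A L) (H : LDMG V' A' L) : Monotone (vrspRem G H) :=
  monotone_nat_of_le_succ fun _ => Set.subset_union_left

lemma mem_vrspRemoved_of (G : LDMG V A L) (H : LDMG V' A' L) [Finite (InterArc G H)]
    {p : V × V'} (h1 : PosLevelBox G H p)
    (h2 : ∀ x, ((G.inter H).mu x).2 = p → ((G.inter H).mu x).1 ∈ vrspRemoved G H) :
    p ∈ vrspRemoved G H := by
  classical
  have h3 : ∀ x : {x : InterArc G H // ((G.inter H).mu x).2 = p},
      ∃ n, ((G.inter H).mu x.1).1 ∈ vrspRem G H n :=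
    fun x => Set.mem_iUnion.mp (h2 x.1 x.2)
  choose fn hfn using h3
  haveI : Fintype {x : InterArc G H // ((G.inter H).mu x).2 = p} :=
    Fintype.ofFinite {x : InterArc G H // ((G.inter H).mu x).2 = p}
  refine Set.mem_iUnion.mpr ⟨Finset.univ.sup fn + 1, Or.inr ⟨h1, fun x hx => ?_⟩⟩
  exact vrspRem_mono G H
    (Finset.le_sup (f := fn)
      (Finset.mem_univ (⟨x, hx⟩ : {y : InterArc G H // ((G.inter H).mu y).2 = p})))
    (hfn ⟨x, hx⟩)

lemma step_wf (G : LDMG V A L) [Finite V] (h : G.Acyclic) : WellFounded G.step := by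
  have h1 : IsIrrefl V (Relation.TransGen G.step) := ⟨h⟩
  exact Subrelation.wf (fun {x y} hxy => Relation.TransGen.single hxy)
    (Finite.wellFounded_of_trans_of_irrefl _)

end LDMG

/-- First decomposition theorem (relaxed): if each largest set of equally-labelled arcs
of `[X,Y]` arc-induces a complete bipartite subgraph of `G`, the arcs of `G/X` and `G/Y`
coming from `[X,Y]` are the only synchronising arcs, all in-degree-0 vertices of `G` lie
in `X`, and `[X,Y]` has no backward arcs, then `G ≅ (G/Y) ⊟ (G/X)` via
`v ∈ X ↦ (v, x̃)`, `w ∈ Y ↦ (ỹ, w)`. -/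
theorem decomposition_one {V A L : Type} [Fintype V] [Fintype A]
    (G : LDMG V A L) (hacyc : G.Acyclic)
    (X Y : Set V) (hXne : X.Nonempty) (hXproper : X ≠ Set.univ) (hY : Y = Xᶜ)
    -- (i) equally-labelled arcs of [X,Y] arc-induce a complete bipartite subgraph
    (hbip : ∀ a b : A,
      (((G.mu a).1 ∈ X ∧ (G.mu a).2 ∈ Y) ∨ ((G.mu a).1 ∈ Y ∧ (G.mu a).2 ∈ X)) →
      (((G.mu b).1 ∈ X ∧ (G.mu b).2 ∈ Y) ∨ ((G.mu b).1 ∈ Y ∧ (G.mu b).2 ∈ X)) →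
      G.lab a = G.lab b →
      ∃ c : A, G.mu c = ((G.mu a).1, (G.mu b).2) ∧ G.lab c = G.lab a)
    -- (ii) the arcs coming from [X,Y] are the only synchronising arcs of G/X and G/Y
    (hsync : ∀ a b : A,
      ¬ ((G.mu a).1 ∈ X ∧ (G.mu a).2 ∈ X) → ¬ ((G.mu b).1 ∈ Y ∧ (G.mu b).2 ∈ Y) →
      G.lab a = G.lab b →
      ((((G.mu a).1 ∈ X ∧ (G.mu a).2 ∈ Y) ∨ ((G.mu a).1 ∈ Y ∧ (G.mu a).2 ∈ X)) ∧
       (((G.mu b).1 ∈ X ∧ (G.mu b).2 ∈ Y) ∨ ((G.mu b).1 ∈ Y ∧ (G.mu b).2 ∈ X))))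
    -- (iii) S'(G) ⊆ X
    (hsource : ∀ v : V, G.InDegZero v → v ∈ X)
    -- (iv) [X,Y] has no backward arcs
    (hnoback : ∀ a : A, (G.mu a).2 ∈ X → (G.mu a).1 ∈ X) :
    ∃ φ : V ≃ LDMG.VrspV (G.contract Y) (G.contract X),
      (∀ v : V, (Subtype.val (φ v) : LDMG.CVertex Y × LDMG.CVertex X) = (LDMG.cMap Y v, LDMG.cMap X v)) ∧
      (∀ (u v : V) (ℓ : L),
        (∃ a, G.mu a = (u, v) ∧ G.lab a = ℓ) ↔
        (∃ b, ((G.contract Y).vrsp (G.contract X)).mu b = (φ u, φ v) ∧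
          ((G.contract Y).vrsp (G.contract X)).lab b = ℓ)) := by
  classical
  subst hY
  have hwf : WellFounded G.step := LDMG.step_wf G hacyc
  have hmc : ∀ z : V, z ∈ Xᶜ ↔ z ∉ X := fun z => Set.mem_compl_iff X z
  -- labels of internal-X arcs do not occur in G/X
  have hlabX : ∀ a : A, (G.mu a).1 ∈ X → (G.mu a).2 ∈ X →
      ¬ (G.contract X).HasLab (G.lab a) := by
    rintro a h1 h2 ⟨b, hb⟩
    obtain ⟨c, rfl⟩ := Quotient.exists_rep b
    rw [LDMG.contract_lab_mk] at hb
    rcases hsync c.1 a c.2 (fun hcon => (hmc _).mp hcon.1 h1) hb with ⟨_, hA⟩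
    rcases hA with ⟨_, h⟩ | ⟨h, _⟩
    · exact (hmc _).mp h h2
    · exact (hmc _).mp h h1
  -- labels of internal-Y arcs do not occur in G/Y
  have hlabY : ∀ a : A, (G.mu a).1 ∉ X → (G.mu a).2 ∉ X →
      ¬ (G.contract Xᶜ).HasLab (G.lab a) := by
    rintro a h1 h2 ⟨b, hb⟩
    obtain ⟨c, rfl⟩ := Quotient.exists_rep b
    rw [LDMG.contract_lab_mk] at hb
    rcases hsync a c.1 (fun hcon => h1 hcon.1) c.2 hb.symm with ⟨hA, _⟩
    rcases hA with ⟨h, _⟩ | ⟨_, h⟩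
    · exact h1 h
    · exact h2 h
  have hlabXhas : ∀ a : A, ¬ ((G.mu a).1 ∈ X ∧ (G.mu a).2 ∈ X) →
      (G.contract X).HasLab (G.lab a) := fun a h =>
    ⟨Quotient.mk (Setoid.ker (LDMG.cKey G X)) ⟨a, h⟩, rfl⟩
  have hlabYhas : ∀ a : A, ¬ ((G.mu a).1 ∈ Xᶜ ∧ (G.mu a).2 ∈ Xᶜ) →
      (G.contract Xᶜ).HasLab (G.lab a) := fun a h =>
    ⟨Quotient.mk (Setoid.ker (LDMG.cKey G Xᶜ)) ⟨a, h⟩, rfl⟩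
  -- x-tilde has in-degree 0 in G/X
  have hxin : ∀ b, ((G.contract X).mu b).2 ≠ Sum.inr () := by
    intro b hb
    obtain ⟨c, rfl⟩ := Quotient.exists_rep b
    rw [LDMG.contract_mu_mk] at hb
    have hh : (G.mu c.1).2 ∈ X := LDMG.mem_of_cMap_eq_inr hb
    exact c.2 ⟨hnoback c.1 hh, hh⟩
  -- every vertex outside X has an in-arc in G
  have hYin : ∀ w, w ∉ X → ∃ a, (G.mu a).2 = w := by
    intro w hw
    by_contra hno
    push_neg at hno
    exact hw (hsource w hno)
  -- a crossing arc exists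
  have hcrossex : ∃ a, (G.mu a).1 ∈ X ∧ (G.mu a).2 ∉ X := by
    obtain ⟨w0, hw0⟩ := (Set.ne_univ_iff_exists_notMem X).mp hXproper
    obtain ⟨m, hm, hmin⟩ := hwf.has_min Xᶜ ⟨w0, (hmc w0).mpr hw0⟩
    obtain ⟨a, ha⟩ := hYin m ((hmc m).mp hm)
    by_cases ht : (G.mu a).1 ∈ X
    · exact ⟨a, ht, by rw [ha]; exact (hmc m).mp hm⟩
    · exact absurd (⟨a, by rw [← ha]⟩ : G.step (G.mu a).1 m)
        (hmin (G.mu a).1 ((hmc _).mpr ht))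
  haveI : Finite (LDMG.InterArc (G.contract Xᶜ) (G.contract X)) := by
    haveI : Finite (G.CPre (Xᶜ : Set V)) := by unfold LDMG.CPre; infer_instance
    haveI : Finite (G.CPre X) := by unfold LDMG.CPre; infer_instance
    haveI : Finite (LDMG.CArc G Xᶜ) := Quotient.finite _
    haveI : Finite (LDMG.CArc G X) := Quotient.finite _
    haveI : Finite (LDMG.CVertex (Xᶜ : Set V)) := by unfold LDMG.CVertex; infer_instance
    haveI : Finite (LDMG.CVertex X) := by unfold LDMG.CVertex; infer_instance
    unfold LDMG.InterArc
    infer_instance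
  -- image vertices are never removed
  have hsurv : ∀ n (v : V), (LDMG.cMap Xᶜ v, LDMG.cMap X v) ∉
      LDMG.vrspRem (G.contract Xᶜ) (G.contract X) n := by
    intro n
    induction n with
    | zero => intro v h; exact h
    | succ n ih =>
      intro v hmem
      rcases hmem with h | ⟨hpos, hall⟩
      · exact ih v h
      by_cases hv : v ∈ X
      · -- v ∈ X : any in-arc of (v, x̃) comes from an internal-X arc into v
        have hnv : v ∉ Xᶜ := Set.notMem_compl_iff.mpr hv
        obtain ⟨x, hx⟩ := hpos
        rcases x with ⟨qa, w⟩ | ⟨u, qb⟩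
        · obtain ⟨c, rfl⟩ := Quotient.exists_rep qa
          have hx1 : LDMG.cMap Xᶜ (G.mu c.1).2 = LDMG.cMap Xᶜ v := congrArg Prod.fst hx
          have hhead : (G.mu c.1).2 = v :=
            LDMG.eq_of_cMap_eq_inl (hx1.trans (LDMG.cMap_not_mem hnv))
          have hhX : (G.mu c.1).2 ∈ X := by rw [hhead]; exact hv
          have htail : (G.mu c.1).1 ∈ X := hnoback c.1 hhX
          have hna : ¬ (G.contract X).HasLab
              ((G.contract Xᶜ).lab (Quotient.mk (Setoid.ker (LDMG.cKey G Xᶜ)) c)) :=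
            hlabX c.1 htail hhX
          have htl := hall (Sum.inl ⟨(Quotient.mk (Setoid.ker (LDMG.cKey G Xᶜ)) c,
              (Sum.inr () : LDMG.CVertex X)), hna⟩)
            (by show (LDMG.cMap Xᶜ (G.mu c.1).2, (Sum.inr () : LDMG.CVertex X)) = _
                rw [hhead, LDMG.cMap_mem hv]; rfl)
          refine ih (G.mu c.1).1 ?_
          show (LDMG.cMap Xᶜ (G.mu c.1).1, LDMG.cMap X (G.mu c.1).1) ∈ _
          rw [LDMG.cMap_mem htail]
          exact htl
        · have hx2 : ((G.contract X).mu qb).2 = LDMG.cMap X v := congrArg Prod.snd hx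
          exact hxin qb (by rw [hx2, LDMG.cMap_mem hv])
      · -- v ∉ X
        obtain ⟨c0, hc0⟩ := hYin v hv
        have hhv : (G.mu c0).2 ∉ X := by rw [hc0]; exact hv
        by_cases ht : (G.mu c0).1 ∈ X
        · -- crossing in-arc : use the synchronous arc
          have hniY : ¬ ((G.mu c0).1 ∈ Xᶜ ∧ (G.mu c0).2 ∈ Xᶜ) :=
            fun h => (hmc _).mp h.1 ht
          have hniX : ¬ ((G.mu c0).1 ∈ X ∧ (G.mu c0).2 ∈ X) := fun h => hhv h.2
          have htl := hall (Sum.inr (Sum.inr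
              ⟨(Quotient.mk (Setoid.ker (LDMG.cKey G Xᶜ)) ⟨c0, hniY⟩,
                Quotient.mk (Setoid.ker (LDMG.cKey G X)) ⟨c0, hniX⟩), rfl⟩))
            (by show (LDMG.cMap Xᶜ (G.mu c0).2, LDMG.cMap X (G.mu c0).2) = _
                rw [hc0])
          refine ih (G.mu c0).1 ?_
          exact htl
        · -- internal-Y in-arc : use the asynchronous copy
          have hniX : ¬ ((G.mu c0).1 ∈ X ∧ (G.mu c0).2 ∈ X) := fun h => hhv h.2
          have hnb : ¬ (G.contract Xᶜ).HasLab
              ((G.contract X).lab (Quotient.mk (Setoid.ker (LDMG.cKey G X)) ⟨c0, hniX⟩)) :=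
            hlabY c0 ht hhv
          have htl := hall (Sum.inr (Sum.inl ⟨(LDMG.cMap Xᶜ v,
              Quotient.mk (Setoid.ker (LDMG.cKey G X)) ⟨c0, hniX⟩), hnb⟩))
            (by show (LDMG.cMap Xᶜ v, LDMG.cMap X (G.mu c0).2) = _
                rw [hc0])
          refine ih (G.mu c0).1 ?_
          show (LDMG.cMap Xᶜ (G.mu c0).1, LDMG.cMap X (G.mu c0).1) ∈ _
          rw [LDMG.cMap_mem ((hmc _).mpr ht), ← LDMG.cMap_mem ((hmc v).mpr hv)]
          exact htl
  have hsurvAll : ∀ v : V, (LDMG.cMap Xᶜ v, LDMG.cMap X v) ∉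
      LDMG.vrspRemoved (G.contract Xᶜ) (G.contract X) := by
    intro v hvmem
    obtain ⟨n, hn⟩ := Set.mem_iUnion.mp hvmem
    exact hsurv n v hn
  -- "diagonal" vertices are removed
  have hbad : ∀ v w : V, ∀ (hv : v ∉ Xᶜ) (hw : w ∉ X),
      ((Sum.inl ⟨v, hv⟩, Sum.inl ⟨w, hw⟩) : LDMG.CVertex (Xᶜ : Set V) × LDMG.CVertex X) ∈
        LDMG.vrspRemoved (G.contract Xᶜ) (G.contract X) := by
    intro v
    induction v using WellFounded.induction hwf with
    | _ v ihv =>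
    intro w
    induction w using WellFounded.induction hwf with
    | _ w ihw =>
    intro hv hw
    have hvX : v ∈ X := Set.notMem_compl_iff.mp hv
    apply LDMG.mem_vrspRemoved_of
    · -- positive level: w has an in-arc in G/X
      obtain ⟨c0, hc0⟩ := hYin w hw
      have hniX : ¬ ((G.mu c0).1 ∈ X ∧ (G.mu c0).2 ∈ X) := fun h => hw (hc0 ▸ h.2)
      refine ⟨Sum.inr ((Sum.inl ⟨v, hv⟩ : LDMG.CVertex (Xᶜ : Set V)),
        Quotient.mk (Setoid.ker (LDMG.cKey G X)) ⟨c0, hniX⟩), ?_⟩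
      show ((Sum.inl ⟨v, hv⟩ : LDMG.CVertex (Xᶜ : Set V)), LDMG.cMap X (G.mu c0).2) = _
      rw [hc0, LDMG.cMap_not_mem hw]; rfl
    · intro x hx
      rcases x with ⟨⟨qa, u⟩, hna⟩ | ⟨⟨u, qb⟩, hnb⟩ | ⟨⟨qa, qb⟩, heq⟩
      · -- asynchronous copy of an arc of G/Y : internal-X arc into v
        obtain ⟨c, rfl⟩ := Quotient.exists_rep qa
        have hx1 : LDMG.cMap Xᶜ (G.mu c.1).2 = Sum.inl ⟨v, hv⟩ := congrArg Prod.fst hx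
        have hx2 : u = Sum.inl ⟨w, hw⟩ := congrArg Prod.snd hx
        subst hx2
        have hhead : (G.mu c.1).2 = v := LDMG.eq_of_cMap_eq_inl hx1
        have hhX : (G.mu c.1).2 ∈ X := by rw [hhead]; exact hvX
        have htail : (G.mu c.1).1 ∈ X := hnoback c.1 hhX
        show (LDMG.cMap Xᶜ (G.mu c.1).1, (Sum.inl ⟨w, hw⟩ : LDMG.CVertex X)) ∈ _
        rw [LDMG.cMap_not_mem (Set.notMem_compl_iff.mpr htail)]
        exact ihv (G.mu c.1).1 ⟨c.1, by rw [← hhead]⟩ w _ hw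
      · -- asynchronous copy of an arc of G/X : internal-Y arc into w
        obtain ⟨d, rfl⟩ := Quotient.exists_rep qb
        have hx1 : u = Sum.inl ⟨v, hv⟩ := congrArg Prod.fst hx
        have hx2 : LDMG.cMap X (G.mu d.1).2 = Sum.inl ⟨w, hw⟩ := congrArg Prod.snd hx
        subst hx1
        have hhead : (G.mu d.1).2 = w := LDMG.eq_of_cMap_eq_inl hx2
        have hhw : (G.mu d.1).2 ∉ X := by rw [hhead]; exact hw
        by_cases htd : (G.mu d.1).1 ∈ X
        · exact absurd (hlabYhas d.1 (fun h => (hmc _).mp h.1 htd)) hnb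
        · show ((Sum.inl ⟨v, hv⟩ : LDMG.CVertex (Xᶜ : Set V)),
              LDMG.cMap X (G.mu d.1).1) ∈ _
          rw [LDMG.cMap_not_mem htd]
          exact ihw (G.mu d.1).1 ⟨d.1, by rw [← hhead]⟩ hv htd
      · -- synchronous arcs cannot point at (v, w)
        exfalso
        obtain ⟨c, rfl⟩ := Quotient.exists_rep qa
        obtain ⟨d, rfl⟩ := Quotient.exists_rep qb
        have hx1 : LDMG.cMap Xᶜ (G.mu c.1).2 = Sum.inl ⟨v, hv⟩ := congrArg Prod.fst hx
        have hhead : (G.mu c.1).2 = v := LDMG.eq_of_cMap_eq_inl hx1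
        rcases (hsync d.1 c.1 d.2 c.2 heq.symm).2 with ⟨_, h⟩ | ⟨h1, h2⟩
        · exact hv (hhead ▸ h)
        · exact (hmc _).mp h1 (hnoback c.1 h2)
  -- (y-tilde, x-tilde) is removed
  have hyx : ((Sum.inr (), Sum.inr ()) : LDMG.CVertex (Xᶜ : Set V) × LDMG.CVertex X) ∈
      LDMG.vrspRemoved (G.contract Xᶜ) (G.contract X) := by
    apply LDMG.mem_vrspRemoved_of
    · obtain ⟨a, ha1, ha2⟩ := hcrossex
      refine ⟨Sum.inl (Quotient.mk (Setoid.ker (LDMG.cKey G Xᶜ))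
        ⟨a, fun h => (hmc _).mp h.1 ha1⟩, (Sum.inr () : LDMG.CVertex X)), ?_⟩
      show (LDMG.cMap Xᶜ (G.mu a).2, (Sum.inr () : LDMG.CVertex X)) = _
      rw [LDMG.cMap_mem ((hmc _).mpr ha2)]; rfl
    · intro x hx
      exfalso
      rcases x with ⟨⟨qa, u⟩, hna⟩ | ⟨⟨u, qb⟩, hnb⟩ | ⟨⟨qa, qb⟩, heq⟩
      · obtain ⟨c, rfl⟩ := Quotient.exists_rep qa
        have hx1 : LDMG.cMap Xᶜ (G.mu c.1).2 = Sum.inr () := congrArg Prod.fst hx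
        have hh : (G.mu c.1).2 ∈ Xᶜ := LDMG.mem_of_cMap_eq_inr hx1
        exact hna (hlabXhas c.1 (fun h => (hmc _).mp hh h.2))
      · obtain ⟨d, rfl⟩ := Quotient.exists_rep qb
        have hx2 : LDMG.cMap X (G.mu d.1).2 = Sum.inr () := congrArg Prod.snd hx
        have hh : (G.mu d.1).2 ∈ X := LDMG.mem_of_cMap_eq_inr hx2
        exact d.2 ⟨hnoback d.1 hh, hh⟩
      · obtain ⟨c, rfl⟩ := Quotient.exists_rep qa
        obtain ⟨d, rfl⟩ := Quotient.exists_rep qb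
        have hx2 : LDMG.cMap X (G.mu d.1).2 = Sum.inr () := congrArg Prod.snd hx
        have hh : (G.mu d.1).2 ∈ X := LDMG.mem_of_cMap_eq_inr hx2
        exact d.2 ⟨hnoback d.1 hh, hh⟩
  -- the bijection
  have hFbij : Function.Bijective (fun v : V =>
      (⟨(LDMG.cMap Xᶜ v, LDMG.cMap X v), hsurvAll v⟩ :
        LDMG.VrspV (G.contract Xᶜ) (G.contract X))) := by
    constructor
    · intro v v' hvv'
      have h := congrArg Subtype.val hvv'
      have h1 : LDMG.cMap Xᶜ v = LDMG.cMap Xᶜ v' := congrArg Prod.fst h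
      have h2 : LDMG.cMap X v = LDMG.cMap X v' := congrArg Prod.snd h
      by_cases hv : v ∈ X
      · by_cases hv' : v' ∈ X
        · rw [LDMG.cMap_not_mem (Set.notMem_compl_iff.mpr hv),
              LDMG.cMap_not_mem (Set.notMem_compl_iff.mpr hv')] at h1
          exact congrArg Subtype.val (Sum.inl.inj h1)
        · rw [LDMG.cMap_mem hv, LDMG.cMap_not_mem hv'] at h2
          exact absurd h2 (by simp)
      · by_cases hv' : v' ∈ X
        · rw [LDMG.cMap_not_mem hv, LDMG.cMap_mem hv'] at h2
          exact absurd h2 (by simp)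
        · rw [LDMG.cMap_not_mem hv, LDMG.cMap_not_mem hv'] at h2
          exact congrArg Subtype.val (Sum.inl.inj h2)
    · rintro ⟨⟨c1, c2⟩, hp⟩
      rcases c1 with p | ⟨⟩ <;> rcases c2 with q | ⟨⟩
      · exact absurd (hbad p.1 q.1 p.2 q.2) hp
      · refine ⟨p.1, Subtype.ext ?_⟩
        show (LDMG.cMap Xᶜ p.1, LDMG.cMap X p.1) = _
        rw [LDMG.cMap_not_mem p.2, LDMG.cMap_mem (Set.notMem_compl_iff.mp p.2)]
      · refine ⟨q.1, Subtype.ext ?_⟩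
        show (LDMG.cMap Xᶜ q.1, LDMG.cMap X q.1) = _
        rw [LDMG.cMap_mem ((hmc _).mpr q.2), LDMG.cMap_not_mem q.2]
      · exact absurd hyx hp
  refine ⟨Equiv.ofBijective _ hFbij, fun v => rfl, ?_⟩
  intro u v ℓ
  constructor
  · rintro ⟨a, hmu, hlab⟩
    have h1 : (G.mu a).1 = u := by rw [hmu]
    have h2 : (G.mu a).2 = v := by rw [hmu]
    by_cases hu : u ∈ X
    · by_cases hvv : v ∈ X
      · -- internal-X arc : asynchronous copy in G/Y
        have hniY : ¬ ((G.mu a).1 ∈ Xᶜ ∧ (G.mu a).2 ∈ Xᶜ) :=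
          fun h => (hmc _).mp h.1 (h1 ▸ hu)
        have hna : ¬ (G.contract X).HasLab
            ((G.contract Xᶜ).lab (Quotient.mk (Setoid.ker (LDMG.cKey G Xᶜ)) ⟨a, hniY⟩)) :=
          hlabX a (by rw [h1]; exact hu) (by rw [h2]; exact hvv)
        refine ⟨⟨Sum.inl ⟨(Quotient.mk (Setoid.ker (LDMG.cKey G Xᶜ)) ⟨a, hniY⟩,
            (Sum.inr () : LDMG.CVertex X)), hna⟩, ?_, ?_⟩, ?_, hlab⟩
        · show (LDMG.cMap Xᶜ (G.mu a).1, (Sum.inr () : LDMG.CVertex X)) ∉ _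
          rw [h1, ← LDMG.cMap_mem hu]
          exact hsurvAll u
        · show (LDMG.cMap Xᶜ (G.mu a).2, (Sum.inr () : LDMG.CVertex X)) ∉ _
          rw [h2, ← LDMG.cMap_mem hvv]
          exact hsurvAll v
        · refine Prod.ext (Subtype.ext ?_) (Subtype.ext ?_)
          · show (LDMG.cMap Xᶜ (G.mu a).1, (Sum.inr () : LDMG.CVertex X)) =
              (LDMG.cMap Xᶜ u, LDMG.cMap X u)
            rw [h1, LDMG.cMap_mem hu]; rfl
          · show (LDMG.cMap Xᶜ (G.mu a).2, (Sum.inr () : LDMG.CVertex X)) =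
              (LDMG.cMap Xᶜ v, LDMG.cMap X v)
            rw [h2, LDMG.cMap_mem hvv]; rfl
      · -- crossing arc : synchronous arc
        have hniY : ¬ ((G.mu a).1 ∈ Xᶜ ∧ (G.mu a).2 ∈ Xᶜ) :=
          fun h => (hmc _).mp h.1 (h1 ▸ hu)
        have hniX : ¬ ((G.mu a).1 ∈ X ∧ (G.mu a).2 ∈ X) := fun h => hvv (h2 ▸ h.2)
        refine ⟨⟨Sum.inr (Sum.inr ⟨(Quotient.mk (Setoid.ker (LDMG.cKey G Xᶜ)) ⟨a, hniY⟩,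
            Quotient.mk (Setoid.ker (LDMG.cKey G X)) ⟨a, hniX⟩), rfl⟩), ?_, ?_⟩, ?_, hlab⟩
        · show (LDMG.cMap Xᶜ (G.mu a).1, LDMG.cMap X (G.mu a).1) ∉ _
          rw [h1]; exact hsurvAll u
        · show (LDMG.cMap Xᶜ (G.mu a).2, LDMG.cMap X (G.mu a).2) ∉ _
          rw [h2]; exact hsurvAll v
        · refine Prod.ext (Subtype.ext ?_) (Subtype.ext ?_)
          · show (LDMG.cMap Xᶜ (G.mu a).1, LDMG.cMap X (G.mu a).1) =
              (LDMG.cMap Xᶜ u, LDMG.cMap X u)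
            rw [h1]
          · show (LDMG.cMap Xᶜ (G.mu a).2, LDMG.cMap X (G.mu a).2) =
              (LDMG.cMap Xᶜ v, LDMG.cMap X v)
            rw [h2]
    · by_cases hvv : v ∈ X
      · -- backward crossing arc: impossible
        exact absurd (h1 ▸ hnoback a (by rw [h2]; exact hvv)) hu
      · -- internal-Y arc : asynchronous copy in G/X
        have hniX : ¬ ((G.mu a).1 ∈ X ∧ (G.mu a).2 ∈ X) := fun h => hu (h1 ▸ h.1)
        have hnb : ¬ (G.contract Xᶜ).HasLab
            ((G.contract X).lab (Quotient.mk (Setoid.ker (LDMG.cKey G X)) ⟨a, hniX⟩)) :=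
          hlabY a (by rw [h1]; exact hu) (by rw [h2]; exact hvv)
        refine ⟨⟨Sum.inr (Sum.inl ⟨(LDMG.cMap Xᶜ u,
            Quotient.mk (Setoid.ker (LDMG.cKey G X)) ⟨a, hniX⟩), hnb⟩), ?_, ?_⟩, ?_, hlab⟩
        · show (LDMG.cMap Xᶜ u, LDMG.cMap X (G.mu a).1) ∉ _
          rw [h1]; exact hsurvAll u
        · show (LDMG.cMap Xᶜ u, LDMG.cMap X (G.mu a).2) ∉ _
          rw [h2, LDMG.cMap_mem ((hmc u).mpr hu), ← LDMG.cMap_mem ((hmc v).mpr hvv)]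
          exact hsurvAll v
        · refine Prod.ext (Subtype.ext ?_) (Subtype.ext ?_)
          · show (LDMG.cMap Xᶜ u, LDMG.cMap X (G.mu a).1) =
              (LDMG.cMap Xᶜ u, LDMG.cMap X u)
            rw [h1]
          · show (LDMG.cMap Xᶜ u, LDMG.cMap X (G.mu a).2) =
              (LDMG.cMap Xᶜ v, LDMG.cMap X v)
            rw [h2, LDMG.cMap_mem ((hmc u).mpr hu), LDMG.cMap_mem ((hmc v).mpr hvv)]
  · rintro ⟨⟨x, hxt, hxh⟩, hmu, hlab⟩
    have hT : (((G.contract Xᶜ).inter (G.contract X)).mu x).1 =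
        (LDMG.cMap Xᶜ u, LDMG.cMap X u) := congrArg (fun p => p.1.1) hmu
    have hH : (((G.contract Xᶜ).inter (G.contract X)).mu x).2 =
        (LDMG.cMap Xᶜ v, LDMG.cMap X v) := congrArg (fun p => p.2.1) hmu
    have hlab' : (((G.contract Xᶜ).inter (G.contract X)).lab x) = ℓ := hlab
    clear hmu hlab hxt hxh
    rcases x with ⟨⟨qa, w⟩, hna⟩ | ⟨⟨w, qb⟩, hnb⟩ | ⟨⟨qa, qb⟩, heq⟩
    · obtain ⟨c, rfl⟩ := Quotient.exists_rep qa
      have hT1 : LDMG.cMap Xᶜ (G.mu c.1).1 = LDMG.cMap Xᶜ u := congrArg Prod.fst hT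
      have hH1 : LDMG.cMap Xᶜ (G.mu c.1).2 = LDMG.cMap Xᶜ v := congrArg Prod.fst hH
      by_cases hh : (G.mu c.1).2 ∈ X
      · have htail : (G.mu c.1).1 ∈ X := hnoback c.1 hh
        have hu' : u = (G.mu c.1).1 :=
          LDMG.eq_of_cMap_eq_inl
            (hT1.symm.trans (LDMG.cMap_not_mem (Set.notMem_compl_iff.mpr htail)))
        have hv' : v = (G.mu c.1).2 :=
          LDMG.eq_of_cMap_eq_inl
            (hH1.symm.trans (LDMG.cMap_not_mem (Set.notMem_compl_iff.mpr hh)))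
        exact ⟨c.1, by rw [hu', hv'], hlab'⟩
      · by_cases ht : (G.mu c.1).1 ∈ X
        · exact absurd (hlabXhas c.1 (fun h => hh h.2)) hna
        · exact absurd ⟨(hmc _).mpr ht, (hmc _).mpr hh⟩ c.2
    · obtain ⟨d, rfl⟩ := Quotient.exists_rep qb
      have hT2 : LDMG.cMap X (G.mu d.1).1 = LDMG.cMap X u := congrArg Prod.snd hT
      have hH2 : LDMG.cMap X (G.mu d.1).2 = LDMG.cMap X v := congrArg Prod.snd hH
      by_cases htd : (G.mu d.1).1 ∈ X
      · by_cases hh : (G.mu d.1).2 ∈ X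
        · exact absurd ⟨htd, hh⟩ d.2
        · exact absurd (hlabYhas d.1 (fun h => (hmc _).mp h.1 htd)) hnb
      · have hh : (G.mu d.1).2 ∉ X := fun h => htd (hnoback d.1 h)
        have hu' : u = (G.mu d.1).1 :=
          LDMG.eq_of_cMap_eq_inl (hT2.symm.trans (LDMG.cMap_not_mem htd))
        have hv' : v = (G.mu d.1).2 :=
          LDMG.eq_of_cMap_eq_inl (hH2.symm.trans (LDMG.cMap_not_mem hh))
        exact ⟨d.1, by rw [hu', hv'], hlab'⟩
    · obtain ⟨c, rfl⟩ := Quotient.exists_rep qa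
      obtain ⟨d, rfl⟩ := Quotient.exists_rep qb
      have hcd := hsync d.1 c.1 d.2 c.2 heq.symm
      have hc : (G.mu c.1).1 ∈ X ∧ (G.mu c.1).2 ∈ Xᶜ := by
        rcases hcd.2 with h | ⟨h1, h2⟩
        · exact h
        · exact absurd (hnoback c.1 h2) ((hmc _).mp h1)
      have hd : (G.mu d.1).1 ∈ X ∧ (G.mu d.1).2 ∈ Xᶜ := by
        rcases hcd.1 with h | ⟨h1, h2⟩
        · exact h
        · exact absurd (hnoback d.1 h2) ((hmc _).mp h1)
      have hT1 : LDMG.cMap Xᶜ (G.mu c.1).1 = LDMG.cMap Xᶜ u := congrArg Prod.fst hT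
      have hH2 : LDMG.cMap X (G.mu d.1).2 = LDMG.cMap X v := congrArg Prod.snd hH
      have hu' : u = (G.mu c.1).1 :=
        LDMG.eq_of_cMap_eq_inl
          (hT1.symm.trans (LDMG.cMap_not_mem (Set.notMem_compl_iff.mpr hc.1)))
      have hv' : v = (G.mu d.1).2 :=
        LDMG.eq_of_cMap_eq_inl
          (hH2.symm.trans (LDMG.cMap_not_mem ((hmc _).mp hd.2)))
      obtain ⟨e, he1, he2⟩ := hbip c.1 d.1 (Or.inl hc) (Or.inl hd) heq
      exact ⟨e, by rw [hu', hv']; exact he1, he2.trans hlab'⟩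
end

section
/- Let G be a labelled acyclic directed multigraph, X a nonempty proper subset of V(G) containing all in-degree-0 vertices of G, and Y = V(G)\setminus X, with [X,Y] having no backward arcs. Then in the Cartesian product (G/Y) \Box (G/X), every vertex of the form (u,v) with u in X and v in Y has positive level (i.e., in-degree > 0 in some stage of the peeling; equivalently (u,v) is not in S^0). -/
/-- If all in-degree-0 vertices of `G` lie in `X` and `[X,Y]` has no backward arcs
(`Y = V(G) ∖ X`), then in the Cartesian product `(G/Y) □ (G/X)` every vertex `(u, v)`
with `u ∈ X` and `v ∈ Y` has positive level, i.e. is not of in-degree 0. -/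
theorem box_mixed_vertices_positive_level {V A L : Type} [Fintype V] [Fintype A]
    (G : LDMG V A L) (hacyc : G.Acyclic)
    (X Y : Set V) (hXne : X.Nonempty) (hXproper : X ≠ Set.univ) (hY : Y = Xᶜ)
    (hsource : ∀ v : V, G.InDegZero v → v ∈ X)
    (hnoback : ∀ a : A, (G.mu a).2 ∈ X → (G.mu a).1 ∈ X) :
    ∀ u ∈ X, ∀ v ∈ Y,
      ¬ ((G.contract Y).box (G.contract X)).InDegZero (LDMG.cMap Y u, LDMG.cMap X v) := by
  intro u hu v hv hdeg
  have hvX : v ∉ X := by rw [hY] at hv; exact hv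
  have hnd : ¬ G.InDegZero v := fun h => hvX (hsource v h)
  simp only [LDMG.InDegZero, not_forall, not_not] at hnd
  obtain ⟨a, ha⟩ := hnd
  have hmem : ¬ ((G.mu a).1 ∈ X ∧ (G.mu a).2 ∈ X) := fun h => hvX (ha ▸ h.2)
  exact hdeg (Sum.inr (LDMG.cMap Y u, Quotient.mk _ ⟨a, hmem⟩))
    (by simp [LDMG.box, LDMG.contract, LDMG.cKey, ha]; exact congrArg (LDMG.cMap X) ha)
end
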